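/- The iteration Γ_k from the original GSTE algorithm coincides with the iteration Δ_k = F̂_Σ^k(⊤) for all k ≥ 1, and hence both stabilize at the same fixpoint: Γ_* = Δ_* = gfp(F̂_Σ). -/

import Mathlib

inductive V : Type
  | zero | one | X | T
deriving DecidableEq

instance instFintypeV : Fintype V where
  elems := {V.zero, V.one, V.X, V.T}
  complete := fun x => by cases x <;> simp

def vleB : V → V → Bool := fun a b =>
  a = b || a = V.X || b = V.T

def vlub : V → V → V
  | V.X, b => b
  | a, V.X => a
  | a, b => if a = b then a else V.T

def vglb : V → V → V
  | V.T, b => b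
  | a, V.T => a
  | a, b => if a = b then a else V.X

instance : LE V := ⟨fun a b => vleB a b = true⟩
instance : DecidableRel (α := V) (· ≤ ·) := fun a b => inferInstanceAs (Decidable (vleB a b = true))

instance : Lattice V where
  le := (· ≤ ·)
  le_refl := by decide
  le_trans := by decide
  le_antisymm := by decide
  sup := vlub
  le_sup_left := by decide
  le_sup_right := by decide
  sup_le := by decide
  inf := vglb
  inf_le_left := by decide
  inf_le_right := by decide
  le_inf := by decide

instance : BoundedOrder V where
  top := V.T
  le_top := by decide
  bot := V.X
  bot_le := by decide

def vand : V → V → V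
  | V.T, _ => V.T
  | _, V.T => V.T
  | V.zero, _ => V.zero
  | _, V.zero => V.zero
  | V.one, V.one => V.one
  | _, _ => V.X

def vor : V → V → V
  | V.T, _ => V.T
  | _, V.T => V.T
  | V.one, _ => V.one
  | _, V.one => V.one
  | V.zero, V.zero => V.zero
  | _, _ => V.X

def vnot : V → V
  | V.zero => V.one
  | V.one => V.zero
  | V.X => V.X
  | V.T => V.T


/-- `nextf regIn s` propagates register inputs to register outputs:
a register output `n` with register input `n'` receives `s n'`; all other
nodes receive X. -/
def nextf {Node : Type} (regIn : Node → Option Node) (s : Node → V) : Node → V :=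
  fun n => (regIn n).elim V.X s

/-- The closure function for sequences induced by a closure function `F`:
`F→(σ)(0) = F(σ(0))`, `F→(σ)(t+1) = F(σ(t+1) ⊔ next(F→(σ)(t)))`. -/
def Fseq {Node : Type} (F : (Node → V) → (Node → V)) (regIn : Node → Option Node)
    (σ : ℕ → Node → V) : ℕ → Node → V
  | 0 => F (σ 0)
  | t + 1 => F (σ (t + 1) ⊔ nextf regIn (Fseq F regIn σ t))

/-- The one-step function `F̂_Σ` on sequence graphs of a fixed finite shape:
`F̂_Σ(Δ)(e) = F(Σ(e))` for initial edges `e`, and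
`F̂_Σ(Δ)(e) = F(Σ(e) ⊔ ⨅_{i ∈ in(e)} next(Δ(i)))` otherwise. -/
def Fhat {Node E : Type} [DecidableEq E]
    (F : (Node → V) → (Node → V)) (regIn : Node → Option Node)
    (initial : E → Bool) (ine : E → Finset E)
    (Sg : E → Node → V) (Δ : E → Node → V) : E → Node → V :=
  fun e =>
    if initial e then F (Sg e)
    else F (Sg e ⊔ (ine e).inf fun i => nextf regIn (Δ i))

/-- `x` is the greatest fixpoint of `f`. -/
def IsGfp {α : Type*} [Preorder α] (f : α → α) (x : α) : Prop :=
  f x = x ∧ ∀ y, f y = y → y ≤ x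

lemma nextf_mono {Node : Type} (regIn : Node → Option Node) {s t : Node → V}
    (h : s ≤ t) : nextf regIn s ≤ nextf regIn t := by
  intro n
  unfold nextf
  cases regIn n with
  | none => exact le_refl _
  | some m => exact h m

lemma Fhat_mono {Node E : Type} [DecidableEq E]
    (F : (Node → V) → (Node → V)) (regIn : Node → Option Node)
    (initial : E → Bool) (ine : E → Finset E) (Sg : E → Node → V)
    (hmono : ∀ s t : Node → V, s ≤ t → F s ≤ F t)
    {Δ₁ Δ₂ : E → Node → V} (h : Δ₁ ≤ Δ₂) :
    Fhat F regIn initial ine Sg Δ₁ ≤ Fhat F regIn initial ine Sg Δ₂ := by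
  intro e
  unfold Fhat
  split
  · exact le_refl _
  · apply hmono
    apply sup_le_sup_left
    exact Finset.inf_mono_fun fun i _ => nextf_mono regIn (h i)

/-- The iteration `Γ_k` from the original GSTE algorithm coincides with the iteration
`Δ_k = F̂_Σ^k(⊤)` for all `k ≥ 1`, and both stabilize at the greatest fixpoint of
`F̂_Σ`. -/
theorem Gamma_eq_Delta {Node E : Type} [DecidableEq E] [Fintype E] [Fintype Node]
    (F : (Node → V) → (Node → V)) (regIn : Node → Option Node)
    (initial : E → Bool) (ine : E → Finset E)
    (hmono : ∀ s t : Node → V, s ≤ t → F s ≤ F t)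
    (hidem : ∀ s : Node → V, F (F s) = F s)
    (hext : ∀ s : Node → V, s ≤ F s)
    (Sg : E → Node → V)
    (Del Gam : ℕ → E → Node → V)
    (hDel0 : Del 0 = ⊤)
    (hDelS : ∀ k, Del (k + 1) = Fhat F regIn initial ine Sg (Del k))
    (hGam0 : ∀ e, Gam 0 e = if initial e then F (Sg e) else ⊤)
    (hGamS : ∀ k e, Gam (k + 1) e =
      Gam k e ⊓ F (Sg e ⊔ (ine e).inf fun i => nextf regIn (Del k i))) :
    (∀ k, 1 ≤ k → Gam k = Del k) ∧
      ∃ N, (∀ k, N ≤ k → Del k = Del N ∧ Gam k = Del N) ∧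
        IsGfp (Fhat F regIn initial ine Sg) (Del N) := by
  classical
  set G := Fhat F regIn initial ine Sg with hG
  have Gmono : ∀ {a b : E → Node → V}, a ≤ b → G a ≤ G b :=
    fun h => Fhat_mono F regIn initial ine Sg hmono h
  have hanti : ∀ k, Del (k + 1) ≤ Del k := by
    intro k
    induction k with
    | zero => rw [hDel0]; exact le_top
    | succ k ih =>
      rw [hDelS (k + 1), hDelS k]
      exact Gmono (hDelS k ▸ ih)
  have hanti' : ∀ m n, m ≤ n → Del n ≤ Del m := by
    intro m n h
    induction n with
    | zero => simp_all
    | succ n ih =>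
      rcases Nat.lt_or_ge m (n + 1) with h' | h'
      · exact le_trans (hanti n) (ih (Nat.lt_succ_iff.mp h'))
      · have : m = n + 1 := le_antisymm h h'
        subst this; exact le_refl _
  -- initial edges are fixed at F (Sg e) from step 1 on
  have hinit : ∀ k e, initial e = true → Del (k + 1) e = F (Sg e) := by
    intro k e he
    rw [hDelS k, hG]
    simp [Fhat, he]
  -- Γ_{k+1} = Δ_{k+1}
  have key : ∀ k, Gam (k + 1) = Del (k + 1) := by
    intro k
    induction k with
    | zero =>
      funext e
      rw [hGamS 0, hGam0, hDelS 0, hG]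
      by_cases he : initial e = true
      · simp only [Fhat]
        rw [if_pos he, if_pos he]
        exact inf_eq_left.mpr (hmono _ _ le_sup_left)
      · simp only [Fhat]
        rw [if_neg he, if_neg he, top_inf_eq]
    | succ k ih =>
      funext e
      rw [hGamS (k + 1), ih]
      by_cases he : initial e = true
      · rw [hinit k e he, hinit (k + 1) e he]
        exact inf_eq_left.mpr (hmono _ _ le_sup_left)
      · have h1 : Del (k + 2) e = F (Sg e ⊔ (ine e).inf fun i => nextf regIn (Del (k + 1) i)) := by
          rw [hDelS (k + 1), hG]; simp [Fhat, he]
        rw [h1]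
        exact inf_eq_right.mpr (le_trans (le_of_eq h1.symm) (hanti (k + 1) e))
  -- stabilization
  have hfin : ∃ m n, m < n ∧ Del m = Del n := by
    obtain ⟨a, b, hne, heq⟩ := Finite.exists_ne_map_eq_of_infinite Del
    rcases lt_or_gt_of_ne hne with h | h
    · exact ⟨a, b, h, heq⟩
    · exact ⟨b, a, h, heq.symm⟩
  obtain ⟨m, n, hmn, heq⟩ := hfin
  have hstab1 : Del (m + 1) = Del m := by
    apply le_antisymm (hanti m)
    calc Del m = Del n := heq
    _ ≤ Del (m + 1) := hanti' _ _ hmn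
  have hconst : ∀ k, m ≤ k → Del k = Del m := by
    intro k hk
    induction k with
    | zero => rw [Nat.le_zero.mp hk]
    | succ k ih =>
      rcases Nat.lt_or_ge m (k + 1) with h' | h'
      · have := ih (Nat.lt_succ_iff.mp h')
        rw [hDelS k, this, ← hDelS m, hstab1]
      · have : m = k + 1 := le_antisymm hk h'
        rw [this]
  have hGam1 : ∀ k, 1 ≤ k → Gam k = Del k := by
    intro k hk
    obtain ⟨j, rfl⟩ := Nat.exists_eq_add_of_le hk
    rw [Nat.add_comm]
    exact key j
  have hfix : G (Del (m + 1)) = Del (m + 1) := by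
    rw [← hDelS (m + 1), hconst (m + 2) (by omega), hstab1]
  have hgreat : ∀ y, G y = y → ∀ k, y ≤ Del k := by
    intro y hy k
    induction k with
    | zero => rw [hDel0]; exact le_top
    | succ k ih => rw [hDelS k, ← hy]; exact Gmono ih
  refine ⟨hGam1, m + 1, fun k hk => ?_, hfix, fun y hy => hgreat y hy (m + 1)⟩
  have h1 : Del k = Del (m + 1) := by
    rw [hconst k (by omega), hstab1]
  exact ⟨h1, by rw [hGam1 k (by omega), h1]⟩
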